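/- There exists a universal constant C > 0 with the following property. Let G be a finite connected simple graph on a vertex set V of size n ≥ 2, equipped with a fixed linear order on V, and let k ≥ 1 be a real number. Set β = (log n)/(2k). Let (δ_u)_{u ∈ V} be independent random variables, each exponentially distributed with rate β (mean 1/β). Define the exponential start time decomposition by assigning each vertex w ∈ V the cluster label cluster(w) := the least vertex u ∈ V (in the fixed linear order) minimizing dist_G(u, w) − δ_u, where dist_G is graph distance. Then for every vertex v ∈ V, the expected number of distinct labels in the set {cluster(w) : w ∈ V, dist_G(v, w) ≤ 1} is at most C · n^{1/k}. That is, the ball B(v,1) of radius 1 around v intersects at most C · n^{1/k} clusters in expectation. -/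

import Mathlib

open MeasureTheory ProbabilityTheory Finset
open scoped ENNReal NNReal

lemma expMeasure_singleton' {r a : ℝ} : expMeasure r {a} = 0 := by
  rw [show expMeasure r = (volume.withDensity (exponentialPDF r)) from rfl,
    withDensity_apply _ (measurableSet_singleton a)]
  exact setLIntegral_measure_zero _ _ Real.volume_singleton

lemma expMeasure_Ici' {r : ℝ} (hr : 0 < r) (a : ℝ) :
    expMeasure r (Set.Ici a) = ENNReal.ofReal (Real.exp (-(r * max a 0))) := by
  have hprob : IsProbabilityMeasure (expMeasure r) := isProbabilityMeasure_expMeasure hr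
  have hIic : expMeasure r (Set.Iic a)
      = ENNReal.ofReal (if 0 ≤ a then 1 - Real.exp (-(r * a)) else 0) := by
    rw [show expMeasure r = (volume.withDensity (exponentialPDF r)) from rfl,
      withDensity_apply _ measurableSet_Iic]
    exact lintegral_exponentialPDF_eq_antiDeriv hr a
  have hIio : expMeasure r (Set.Iio a)
      = ENNReal.ofReal (if 0 ≤ a then 1 - Real.exp (-(r * a)) else 0) := by
    rw [← Set.Iic_diff_right, measure_diff_null expMeasure_singleton', hIic]
  have hcompl : expMeasure r (Set.Ici a) = 1 - expMeasure r (Set.Iio a) := by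
    rw [← Set.compl_Iio, measure_compl measurableSet_Iio (measure_ne_top _ _), measure_univ]
  rw [hcompl, hIio]
  rcases le_or_gt 0 a with h | h
  · rw [if_pos h, max_eq_left h]
    have he : Real.exp (-(r * a)) ≤ 1 := by
      rw [Real.exp_le_one_iff]
      nlinarith
    rw [show (1 : ENNReal) = ENNReal.ofReal 1 by simp,
      ← ENNReal.ofReal_sub _ (by linarith [Real.exp_pos (-(r * a))])]
    norm_num
  · rw [if_neg (not_le.mpr h), max_eq_right h.le]
    simp [Real.exp_zero]

lemma expMeasure_Ici_le' {r t : ℝ} (hr : 0 < r) (ht : 0 ≤ t) (y : ℝ) :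
    expMeasure r (Set.Ici (y - t))
      ≤ ENNReal.ofReal (Real.exp (r * t)) * expMeasure r (Set.Ici y) := by
  rw [expMeasure_Ici' hr, expMeasure_Ici' hr, ← ENNReal.ofReal_mul (Real.exp_pos _).le,
    ← Real.exp_add]
  apply ENNReal.ofReal_le_ofReal
  apply Real.exp_le_exp.mpr
  have h1 : max y 0 ≤ max (y - t) 0 + t :=
    max_le (by linarith [le_max_left (y - t) 0]) (add_nonneg (le_max_right _ _) ht)
  nlinarith [hr.le]

lemma iIndepFun_congr' {Ω ι : Type*} [MeasurableSpace Ω] {μ : Measure Ω}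
    {f g : ι → Ω → ℝ} (h : iIndepFun f μ)
    (hfg : ∀ i, f i =ᵐ[μ] g i) : iIndepFun g μ := by
  rw [iIndepFun_iff_measure_inter_preimage_eq_mul] at h ⊢
  intro S sets hsets
  have key : ∀ i ∈ S, μ (g i ⁻¹' sets i) = μ (f i ⁻¹' sets i) := by
    intro i _
    apply measure_congr
    apply Filter.eventuallyEq_set.mpr
    filter_upwards [hfg i] with ω hω
    simp [Set.mem_preimage, hω]
  have h2 : μ (⋂ i ∈ S, g i ⁻¹' sets i) = μ (⋂ i ∈ S, f i ⁻¹' sets i) := by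
    apply measure_congr
    apply Filter.eventuallyEq_set.mpr
    have hS : ∀ᵐ ω ∂μ, ∀ i ∈ S, f i ω = g i ω :=
      (MeasureTheory.ae_ball_iff S.countable_toSet).mpr fun i _ => hfg i
    filter_upwards [hS] with ω hω
    simp only [Set.mem_iInter, Set.mem_preimage]
    exact ⟨fun h' i hi => (hω i hi) ▸ h' i hi, fun h' i hi => (hω i hi) ▸ h' i hi⟩
  rw [h2, h S hsets]
  exact (Finset.prod_congr rfl fun i hi => (key i hi).symm)

/-- Corollary 3.1 of Miller–Peng–Vladu–Xu: in an exponential start time decomposition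
with parameter `β = (log n) / (2k)`, for any vertex `v` the ball `B(v,1)` intersects
`O(n^{1/k})` clusters in expectation. -/
theorem ball_intersects_clusters_expectation
    : ∃ C : ℝ, 0 < C ∧
      ∀ (V : Type) [Fintype V] [LinearOrder V] (G : SimpleGraph V),
        G.Connected → 2 ≤ Fintype.card V →
      ∀ k : ℝ, 1 ≤ k →
      ∀ (Ω : Type) [MeasurableSpace Ω] (μ : Measure Ω), IsProbabilityMeasure μ →
      ∀ (δ : V → Ω → ℝ),
        (∀ u : V, Measure.map (δ u) μ =
          expMeasure (Real.log (Fintype.card V) / (2 * k))) →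
        iIndepFun δ μ →
      ∀ (cluster : Ω → V → V),
        (∀ (ω : Ω) (w : V),
          IsLeast {u : V | ∀ u' : V,
              (G.dist u w : ℝ) - δ u ω ≤ (G.dist u' w : ℝ) - δ u' ω}
            (cluster ω w)) →
      ∀ v : V,
        ∫ ω, ((((Finset.univ.filter (fun w => G.dist v w ≤ 1))).image
            (cluster ω)).card : ℝ) ∂μ
          ≤ C * (Fintype.card V : ℝ) ^ ((1 : ℝ) / k) := by
  classical
  refine ⟨1, one_pos, ?_⟩
  intro V _ _ G hconn hcard k hk Ω _ μ hμ δ hmap hindep cluster hclu v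
  set β : ℝ := Real.log (Fintype.card V) / (2 * k) with hβdef
  have hn2 : (2 : ℝ) ≤ (Fintype.card V : ℝ) := by exact_mod_cast hcard
  have hk0 : (0 : ℝ) < k := lt_of_lt_of_le one_pos hk
  have hβ : 0 < β := div_pos (Real.log_pos (by linarith)) (by linarith)
  haveI : Nonempty V := Fintype.card_pos_iff.mp (by omega)
  haveI hprob : IsProbabilityMeasure (expMeasure β) := isProbabilityMeasure_expMeasure hβ
  -- a.e.-measurability of the shifts
  have haem : ∀ u, AEMeasurable (δ u) μ := by
    intro u
    by_contra hm
    have h0 : Measure.map (δ u) μ = 0 := Measure.map_of_not_aemeasurable hm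
    rw [hmap u] at h0
    have h1 := hprob.measure_univ
    rw [h0] at h1
    simp at h1
  -- measurable modifications
  set δ' : V → Ω → ℝ := fun u => (haem u).mk (δ u) with hδ'def
  have hmeas' : ∀ u, Measurable (δ' u) := fun u => (haem u).measurable_mk
  have hae : ∀ u, δ u =ᵐ[μ] δ' u := fun u => (haem u).ae_eq_mk
  have hmap' : ∀ u, Measure.map (δ' u) μ = expMeasure β := fun u => by
    rw [← Measure.map_congr (hae u), hmap u]
  have hindep' : iIndepFun δ' μ := iIndepFun_congr' hindep hae
  -- key events
  set A : V → Set Ω := fun u =>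
    {ω | ∀ u', (G.dist u v : ℝ) - δ' u ω ≤ (G.dist u' v : ℝ) - δ' u' ω + 2} with hA
  set E : V → Set Ω := fun u =>
    {ω | ∀ u', (G.dist u v : ℝ) - δ' u ω ≤ (G.dist u' v : ℝ) - δ' u' ω} with hE
  set T : V × V → Set Ω := fun p =>
    {ω | (G.dist p.1 v : ℝ) - δ' p.1 ω = (G.dist p.2 v : ℝ) - δ' p.2 ω} with hT
  have hAmeas : ∀ u, MeasurableSet (A u) := by
    intro u
    have : A u = ⋂ u', {ω | (G.dist u v : ℝ) - δ' u ω ≤ (G.dist u' v : ℝ) - δ' u' ω + 2} := by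
      ext ω; simp [hA, Set.mem_iInter]
    rw [this]
    exact MeasurableSet.iInter fun u' =>
      measurableSet_le (measurable_const.sub (hmeas' u)) ((measurable_const.sub (hmeas' u')).add measurable_const)
  have hEmeas : ∀ u, MeasurableSet (E u) := by
    intro u
    have : E u = ⋂ u', {ω | (G.dist u v : ℝ) - δ' u ω ≤ (G.dist u' v : ℝ) - δ' u' ω} := by
      ext ω; simp [hE, Set.mem_iInter]
    rw [this]
    exact MeasurableSet.iInter fun u' =>
      measurableSet_le (measurable_const.sub (hmeas' u)) (measurable_const.sub (hmeas' u'))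
  have hTmeas : ∀ p : V × V, MeasurableSet (T p) := fun p =>
    measurableSet_eq_fun (measurable_const.sub (hmeas' p.1)) (measurable_const.sub (hmeas' p.2))
  -- pointwise deterministic bound
  have hball : ∀ ω, (∀ u, δ u ω = δ' u ω) →
      ((((Finset.univ.filter (fun w => G.dist v w ≤ 1))).image (cluster ω)).card : ℝ)
        ≤ ∑ u, (A u).indicator (fun _ => (1 : ℝ)) ω := by
    intro ω hω
    have hsub : ((Finset.univ.filter (fun w => G.dist v w ≤ 1))).image (cluster ω)
        ⊆ Finset.univ.filter (fun u => ω ∈ A u) := by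
      rw [Finset.image_subset_iff]
      intro w hw
      rw [Finset.mem_filter] at hw ⊢
      refine ⟨Finset.mem_univ _, ?_⟩
      intro u'
      obtain ⟨hmem, -⟩ := hclu ω w
      have h1 : (G.dist (cluster ω w) w : ℝ) - δ (cluster ω w) ω
          ≤ (G.dist u' w : ℝ) - δ u' ω := hmem u'
      have ht1 : G.dist (cluster ω w) v ≤ G.dist (cluster ω w) w + G.dist w v :=
        hconn.dist_triangle
      have ht2 : G.dist u' w ≤ G.dist u' v + G.dist v w := hconn.dist_triangle
      have hd : G.dist w v ≤ 1 := by rw [SimpleGraph.dist_comm]; exact hw.2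
      have hd2 : G.dist v w ≤ 1 := hw.2
      have c1 : (G.dist (cluster ω w) v : ℝ) ≤ (G.dist (cluster ω w) w : ℝ) + 1 := by
        have : G.dist (cluster ω w) v ≤ G.dist (cluster ω w) w + 1 :=
          le_trans ht1 (by omega)
        exact_mod_cast this
      have c2 : (G.dist u' w : ℝ) ≤ (G.dist u' v : ℝ) + 1 := by
        have : G.dist u' w ≤ G.dist u' v + 1 := le_trans ht2 (by omega)
        exact_mod_cast this
      rw [← hω (cluster ω w), ← hω u']
      linarith
    calc ((((Finset.univ.filter (fun w => G.dist v w ≤ 1))).image (cluster ω)).card : ℝ)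
        ≤ ((Finset.univ.filter (fun u => ω ∈ A u)).card : ℝ) := by
          exact_mod_cast Finset.card_le_card hsub
      _ = ∑ u, (A u).indicator (fun _ => (1 : ℝ)) ω := by
          rw [Finset.card_filter]
          push_cast
          exact Finset.sum_congr rfl fun u _ => by
            by_cases h : ω ∈ A u <;> simp [h]
  -- the tie events are null
  have htie : ∀ p : V × V, p.1 ≠ p.2 → μ (T p) = 0 := by
    intro p hp
    have hind2 : IndepFun (δ' p.1) (δ' p.2) μ := hindep'.indepFun hp
    have hmp : μ.map (fun ω => (δ' p.1 ω, δ' p.2 ω)) = (μ.map (δ' p.1)).prod (μ.map (δ' p.2)) :=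
      (indepFun_iff_map_prod_eq_prod_map_map (hmeas' p.1).aemeasurable
        (hmeas' p.2).aemeasurable).mp hind2
    have hst : MeasurableSet {q : ℝ × ℝ |
        (G.dist p.1 v : ℝ) - q.1 = (G.dist p.2 v : ℝ) - q.2} :=
      measurableSet_eq_fun (measurable_const.sub measurable_fst)
        (measurable_const.sub measurable_snd)
    have hTp : T p = (fun ω => (δ' p.1 ω, δ' p.2 ω)) ⁻¹'
        {q : ℝ × ℝ | (G.dist p.1 v : ℝ) - q.1 = (G.dist p.2 v : ℝ) - q.2} := rfl
    rw [hTp, ← Measure.map_apply ((hmeas' p.1).prodMk (hmeas' p.2)) hst, hmp,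
      hmap' p.1, hmap' p.2, Measure.prod_apply hst]
    have hsl : ∀ x : ℝ, (Prod.mk x ⁻¹'
        {q : ℝ × ℝ | (G.dist p.1 v : ℝ) - q.1 = (G.dist p.2 v : ℝ) - q.2})
        = {(G.dist p.2 v : ℝ) - ((G.dist p.1 v : ℝ) - x)} := by
      intro x
      ext y
      simp only [Set.mem_preimage, Set.mem_setOf_eq, Set.mem_singleton_iff]
      constructor <;> intro h <;> linarith
    rw [lintegral_congr fun x => by rw [hsl x, expMeasure_singleton']]
    simp
  -- sum of minimizer-event probabilities is at most 1
  have hEsum : ∑ u, μ (E u) ≤ 1 := by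
    have hpoint : ∀ ω, ∑ u, (E u).indicator (fun _ => (1 : ℝ≥0∞)) ω
        ≤ 1 + ∑ p ∈ Finset.univ.offDiag, (T p).indicator (fun _ => (1 : ℝ≥0∞)) ω := by
      intro ω
      have hL : ∑ u, (E u).indicator (fun _ => (1 : ℝ≥0∞)) ω
          = ((Finset.univ.filter fun u => ω ∈ E u).card : ℝ≥0∞) := by
        rw [Finset.card_filter]
        push_cast
        exact (Finset.sum_congr rfl fun u _ => by by_cases h : ω ∈ E u <;> simp [h]).symm
      have hR : ∑ p ∈ Finset.univ.offDiag, (T p).indicator (fun _ => (1 : ℝ≥0∞)) ω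
          = ((Finset.univ.offDiag.filter fun p => ω ∈ T p).card : ℝ≥0∞) := by
        rw [Finset.card_filter]
        push_cast
        exact (Finset.sum_congr rfl fun p _ => by by_cases h : ω ∈ T p <;> simp [h]).symm
      rw [hL, hR]
      set S := Finset.univ.filter fun u => ω ∈ E u with hS
      have hsub : S.offDiag ⊆ Finset.univ.offDiag.filter fun p => ω ∈ T p := by
        intro p hp
        rw [Finset.mem_offDiag] at hp
        obtain ⟨h1, h2, h3⟩ := hp
        rw [hS, Finset.mem_filter] at h1 h2
        rw [Finset.mem_filter, Finset.mem_offDiag]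
        refine ⟨⟨Finset.mem_univ _, Finset.mem_univ _, h3⟩, ?_⟩
        exact le_antisymm (h1.2 p.2) (h2.2 p.1)
      have hcard : S.offDiag.card ≤ (Finset.univ.offDiag.filter fun p => ω ∈ T p).card :=
        Finset.card_le_card hsub
      rw [Finset.offDiag_card] at hcard
      have hnat : S.card ≤ 1 + (Finset.univ.offDiag.filter fun p => ω ∈ T p).card := by
        rcases Nat.eq_zero_or_pos S.card with h | h
        · omega
        · have hss : 2 * S.card ≤ S.card * S.card + 1 := by
            zify
            nlinarith [sq_nonneg ((S.card : ℤ) - 1)]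
          omega
      calc (S.card : ℝ≥0∞) ≤ ((1 + (Finset.univ.offDiag.filter fun p => ω ∈ T p).card : ℕ) : ℝ≥0∞) :=
            Nat.cast_le.mpr hnat
        _ = 1 + ((Finset.univ.offDiag.filter fun p => ω ∈ T p).card : ℝ≥0∞) := by push_cast; ring
    have hl : ∑ u, μ (E u) = ∫⁻ ω, ∑ u, (E u).indicator (fun _ => (1 : ℝ≥0∞)) ω ∂μ := by
      rw [lintegral_finset_sum _ fun u _ => measurable_const.indicator (hEmeas u)]
      exact Finset.sum_congr rfl fun u _ => by
        rw [lintegral_indicator_const (hEmeas u), one_mul]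
    rw [hl]
    calc ∫⁻ ω, ∑ u, (E u).indicator (fun _ => (1 : ℝ≥0∞)) ω ∂μ
        ≤ ∫⁻ ω, (1 + ∑ p ∈ Finset.univ.offDiag, (T p).indicator (fun _ => (1 : ℝ≥0∞)) ω) ∂μ :=
          lintegral_mono hpoint
      _ = ∫⁻ _, (1 : ℝ≥0∞) ∂μ
          + ∫⁻ ω, ∑ p ∈ Finset.univ.offDiag, (T p).indicator (fun _ => (1 : ℝ≥0∞)) ω ∂μ :=
          lintegral_add_left measurable_const _
      _ = 1 := by
          rw [lintegral_const, lintegral_finset_sum _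
            fun p _ => measurable_const.indicator (hTmeas p)]
          have : ∀ p ∈ Finset.univ.offDiag,
              ∫⁻ ω, (T p).indicator (fun _ => (1 : ℝ≥0∞)) ω ∂μ = 0 := by
            intro p hp
            rw [lintegral_indicator_const (hTmeas p), one_mul,
              htie p (Finset.mem_offDiag.mp hp).2.2]
          rw [Finset.sum_congr rfl this]
          simp
  -- per-vertex comparison: μ (A u) ≤ e^{2β} μ (E u)
  have hkey : ∀ u, μ (A u) ≤ ENNReal.ofReal (Real.exp (β * 2)) * μ (E u) := by
    intro u
    have hne : (Finset.univ.erase u).Nonempty := by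
      rw [← Finset.card_pos, Finset.card_erase_of_mem (Finset.mem_univ u), Finset.card_univ]
      omega
    haveI hne' : Nonempty {x // x ∈ Finset.univ.erase u} := Finset.nonempty_coe_sort.mpr hne
    set φ : ({x // x ∈ Finset.univ.erase u} → ℝ) → ℝ := fun x =>
      Finset.univ.sup' Finset.univ_nonempty
        (fun i : {x // x ∈ Finset.univ.erase u} =>
          (G.dist u v : ℝ) - (G.dist i.1 v : ℝ) + x i) with hφ
    set Z : Ω → ℝ := fun ω => φ (fun i => δ' i.1 ω) with hZ
    have hφm : Measurable φ := by
      have h1 : φ = Finset.univ.sup' Finset.univ_nonempty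
          (fun (i : {x // x ∈ Finset.univ.erase u})
              (x : {x // x ∈ Finset.univ.erase u} → ℝ) =>
            (G.dist u v : ℝ) - (G.dist i.1 v : ℝ) + x i) := by
        funext x
        rw [hφ, Finset.sup'_apply]
      rw [h1]
      exact Finset.measurable_sup' _ fun i _ => (measurable_pi_apply i).const_add _
    have hZm : Measurable Z := hφm.comp (measurable_pi_lambda _ fun i => hmeas' i.1)
    have hW := hindep'.indepFun_finset (Finset.univ.erase u) {u}
      (Finset.disjoint_singleton_right.mpr (Finset.notMem_erase u _)) hmeas'
    have hψm : Measurable (fun x : ({x // x ∈ ({u} : Finset V)} → ℝ) =>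
        x ⟨u, Finset.mem_singleton_self u⟩) := measurable_pi_apply _
    have hZindep : IndepFun Z (δ' u) μ := hW.comp hφm hψm
    have hcompute : ∀ t : ℝ, μ {ω | Z ω - t ≤ δ' u ω}
        = ∫⁻ y, expMeasure β (Set.Ici (y - t)) ∂(μ.map Z) := by
      intro t
      have hst : MeasurableSet {p : ℝ × ℝ | p.1 - t ≤ p.2} :=
        measurableSet_le (measurable_fst.sub measurable_const) measurable_snd
      have hmp : μ.map (fun ω => (Z ω, δ' u ω)) = (μ.map Z).prod (μ.map (δ' u)) :=
        (indepFun_iff_map_prod_eq_prod_map_map hZm.aemeasurable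
          (hmeas' u).aemeasurable).mp hZindep
      have hpre : {ω | Z ω - t ≤ δ' u ω}
          = (fun ω => (Z ω, δ' u ω)) ⁻¹' {p : ℝ × ℝ | p.1 - t ≤ p.2} := rfl
      rw [hpre, ← Measure.map_apply (hZm.prodMk (hmeas' u)) hst, hmp, hmap' u,
        Measure.prod_apply hst]
      refine lintegral_congr fun y => ?_
      congr 1
    have hAu : A u = {ω | Z ω - 2 ≤ δ' u ω} := by
      ext ω
      simp only [hA, Set.mem_setOf_eq, hZ, hφ, sub_le_iff_le_add, Finset.sup'_apply,
        Finset.sup'_le_iff]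
      constructor
      · intro h i _
        have := h i.1
        linarith
      · intro h u'
        by_cases hu : u' = u
        · subst hu; linarith
        · have := h ⟨u', Finset.mem_erase.mpr ⟨hu, Finset.mem_univ _⟩⟩ (Finset.mem_univ _)
          linarith
    have hEu : E u = {ω | Z ω - 0 ≤ δ' u ω} := by
      ext ω
      simp only [hE, Set.mem_setOf_eq, hZ, hφ, sub_zero, Finset.sup'_apply, Finset.sup'_le_iff]
      constructor
      · intro h i _
        have := h i.1
        linarith
      · intro h u'
        by_cases hu : u' = u
        · subst hu; linarith
        · have := h ⟨u', Finset.mem_erase.mpr ⟨hu, Finset.mem_univ _⟩⟩ (Finset.mem_univ _)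
          linarith
    rw [hAu, hEu, hcompute 2, hcompute 0]
    calc ∫⁻ y, expMeasure β (Set.Ici (y - 2)) ∂(μ.map Z)
        ≤ ∫⁻ y, ENNReal.ofReal (Real.exp (β * 2)) * expMeasure β (Set.Ici (y - 0)) ∂(μ.map Z) := by
          refine lintegral_mono fun y => ?_
          rw [sub_zero]
          exact expMeasure_Ici_le' hβ (by norm_num) y
      _ = ENNReal.ofReal (Real.exp (β * 2))
            * ∫⁻ y, expMeasure β (Set.Ici (y - 0)) ∂(μ.map Z) :=
          lintegral_const_mul' _ _ ENNReal.ofReal_ne_top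
  -- final assembly
  have hint : ∀ u : V, Integrable ((A u).indicator (fun _ => (1 : ℝ))) μ :=
    fun u => (integrable_const 1).indicator (hAmeas u)
  have hgint : Integrable (fun ω => ∑ u, (A u).indicator (fun _ => (1 : ℝ)) ω) μ :=
    integrable_finset_sum _ fun u _ => hint u
  have hgood : ∀ᵐ ω ∂μ, ∀ u, δ u ω = δ' u ω := ae_all_iff.mpr hae
  have step1 : ∫ ω, ((((Finset.univ.filter (fun w => G.dist v w ≤ 1))).image
      (cluster ω)).card : ℝ) ∂μ ≤ ∫ ω, ∑ u, (A u).indicator (fun _ => (1 : ℝ)) ω ∂μ :=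
    integral_mono_of_nonneg (ae_of_all _ fun ω => by positivity) hgint
      (by filter_upwards [hgood] with ω hω; exact hball ω hω)
  have step2 : ∫ ω, ∑ u, (A u).indicator (fun _ => (1 : ℝ)) ω ∂μ
      = ∑ u, (μ (A u)).toReal := by
    rw [integral_finset_sum _ fun u _ => hint u]
    refine Finset.sum_congr rfl fun u _ => ?_
    rw [integral_indicator_const (1 : ℝ) (hAmeas u), smul_eq_mul, mul_one, measureReal_def]
  have hAsum : ∑ u, μ (A u) ≤ ENNReal.ofReal (Real.exp (β * 2)) := by
    calc ∑ u, μ (A u) ≤ ∑ u, ENNReal.ofReal (Real.exp (β * 2)) * μ (E u) :=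
          Finset.sum_le_sum fun u _ => hkey u
      _ = ENNReal.ofReal (Real.exp (β * 2)) * ∑ u, μ (E u) := by rw [Finset.mul_sum]
      _ ≤ ENNReal.ofReal (Real.exp (β * 2)) * 1 := mul_le_mul_right hEsum _
      _ = ENNReal.ofReal (Real.exp (β * 2)) := mul_one _
  have hfinal : ∑ u, (μ (A u)).toReal ≤ Real.exp (β * 2) := by
    rw [← ENNReal.toReal_sum fun u _ => measure_ne_top μ _]
    calc (∑ u, μ (A u)).toReal ≤ (ENNReal.ofReal (Real.exp (β * 2))).toReal :=
          ENNReal.toReal_mono ENNReal.ofReal_ne_top hAsum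
      _ = Real.exp (β * 2) := ENNReal.toReal_ofReal (Real.exp_pos _).le
  have hpow : Real.exp (β * 2) = (Fintype.card V : ℝ) ^ ((1 : ℝ) / k) := by
    rw [Real.rpow_def_of_pos (by linarith : (0 : ℝ) < (Fintype.card V : ℝ)), hβdef]
    congr 1
    field_simp
  calc ∫ ω, ((((Finset.univ.filter (fun w => G.dist v w ≤ 1))).image
      (cluster ω)).card : ℝ) ∂μ
      ≤ ∫ ω, ∑ u, (A u).indicator (fun _ => (1 : ℝ)) ω ∂μ := step1
    _ = ∑ u, (μ (A u)).toReal := step2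
    _ ≤ Real.exp (β * 2) := hfinal
    _ = 1 * (Fintype.card V : ℝ) ^ ((1 : ℝ) / k) := by rw [hpow, one_mul]
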